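/- arXiv:2301.07566 — 3 statements merged into one kernel-verified Lean document; each statement's English description precedes it below -/
import Mathlib

section
/- Let W : ZMod 2 → Y → ℝ≥0 and W' : ZMod 2 → Y' → ℝ≥0 be binary-input discrete memoryless channels with finite output alphabets Y and Y'. If W is degraded with respect to W', then Z(W) ≥ Z(W'), where Z denotes the Bhattacharyya parameter. -/
open Finset

/-- A binary-input discrete memoryless channel: the outputs sum to 1 for each input. -/
def IsBDMC {Y : Type*} [Fintype Y] (W : ZMod 2 → Y → NNReal) : Prop :=
  ∀ u : ZMod 2, ∑ y, W u y = 1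

/-- `W` is degraded with respect to `W'`. -/
def Degraded {Y Y' : Type*} [Fintype Y] [Fintype Y'] (W : ZMod 2 → Y → NNReal)
    (W' : ZMod 2 → Y' → NNReal) : Prop :=
  ∃ P : Y' → Y → NNReal, (∀ y', ∑ y, P y' y = 1) ∧
    ∀ (u : ZMod 2) (y : Y), W u y = ∑ y', W' u y' * P y' y

/-- The Bhattacharyya parameter of a B-DMC. -/
noncomputable def bhattacharyya {Y : Type*} [Fintype Y] (W : ZMod 2 → Y → NNReal) : NNReal :=
  ∑ y, NNReal.sqrt (W 0 y * W 1 y)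

theorem bhattacharyya_ge_of_degraded {Y Y' : Type*} [Fintype Y] [Fintype Y']
    (W : ZMod 2 → Y → NNReal) (W' : ZMod 2 → Y' → NNReal)
    (hW : IsBDMC W) (hW' : IsBDMC W') (h : Degraded W W') :
    bhattacharyya W' ≤ bhattacharyya W := by
  obtain ⟨P, hP, hWP⟩ := h
  calc bhattacharyya W'
      = ∑ y' : Y', NNReal.sqrt (W' 0 y' * W' 1 y') * (∑ y : Y, P y' y) := by
        simp [bhattacharyya, hP]
    _ = ∑ y : Y, ∑ y' : Y', NNReal.sqrt (W' 0 y' * P y' y) * NNReal.sqrt (W' 1 y' * P y' y) := by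
        rw [Finset.sum_comm]
        refine Finset.sum_congr rfl fun y' _ => ?_
        rw [Finset.mul_sum]
        refine Finset.sum_congr rfl fun y _ => ?_
        rw [← NNReal.sqrt_mul_self (P y' y), ← NNReal.sqrt_mul, ← NNReal.sqrt_mul]
        ring_nf
        rw [NNReal.sqrt_sq]
    _ ≤ ∑ y : Y, NNReal.sqrt (∑ y' : Y', W' 0 y' * P y' y) *
          NNReal.sqrt (∑ y' : Y', W' 1 y' * P y' y) :=
        Finset.sum_le_sum fun y _ => NNReal.sum_sqrt_mul_sqrt_le _ _ _
    _ = bhattacharyya W := by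
        simp [bhattacharyya, hWP, NNReal.sqrt_mul]
end

section
/- Let W : ZMod 2 → Y → ℝ≥0 and W' : ZMod 2 → Y' → ℝ≥0 be binary-input discrete memoryless channels with finite output alphabets. If W is degraded with respect to W', then the minus-polarized channel W⁻ is degraded with respect to W'⁻, where W⁻ : ZMod 2 → (Y × Y) → ℝ≥0 is defined by W⁻(u₁)(y₁, y₂) = (1/2) · ∑_{u₂ ∈ ZMod 2} W(u₁ + u₂)(y₁) · W(u₂)(y₂). -/
open Finset

/-- The minus-polarized channel `W⁻`. -/
noncomputable def minusChannel {Y : Type*} [Fintype Y] (W : ZMod 2 → Y → NNReal) :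
    ZMod 2 → Y × Y → NNReal :=
  fun u₁ y => (1 / 2 : NNReal) * ∑ u₂ : ZMod 2, W (u₁ + u₂) y.1 * W u₂ y.2

theorem minus_degraded_of_degraded {Y Y' : Type*} [Fintype Y] [Fintype Y']
    (W : ZMod 2 → Y → NNReal) (W' : ZMod 2 → Y' → NNReal)
    (hW : IsBDMC W) (hW' : IsBDMC W') (h : Degraded W W') :
    Degraded (minusChannel W) (minusChannel W') := by
  obtain ⟨P, hPsum, hPdeg⟩ := h
  refine ⟨fun y' y => P y'.1 y.1 * P y'.2 y.2, ?_, ?_⟩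
  · intro y'
    rw [Fintype.sum_prod_type]
    simp [← Finset.mul_sum, ← Finset.sum_mul, hPsum]
  · intro u y
    simp only [minusChannel, Fintype.sum_prod_type]
    simp only [hPdeg, Finset.sum_mul_sum, Finset.mul_sum, Finset.sum_mul]
    conv_lhs => enter [2, u₂]; rw [Finset.sum_comm]
    conv_lhs => rw [Finset.sum_comm]
    refine Finset.sum_congr rfl fun y₁' _ => ?_
    conv_lhs => rw [Finset.sum_comm]
    refine Finset.sum_congr rfl fun y₂' _ => ?_
    refine Finset.sum_congr rfl fun u₂ _ => ?_
    ring
end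

section
/- (Equation (6): piecewise formula for the LLR distance function) Let s, a ∈ ℤ and γ ∈ ℕ. Define R = (min over integers x with a + 2^γ ≤ x < a + 2^{γ+1} of |x − s|) − (min over integers x with a ≤ x < a + 2^γ of |x − s|). Then R = 2^γ if s < a; R = −2^γ if s ≥ a + 2^{γ+1}; and R = 2^γ − (s − a) − ⌊(s − a)/2^γ⌋ if a ≤ s < a + 2^{γ+1}, where ⌊·⌋ denotes integer floor division. -/
open Finset

lemma inf_abs_Ico (s l u : ℤ) (h : l < u) :
    (Finset.Ico l u).inf' (Finset.nonempty_Ico.mpr h) (fun x => |x - s|) =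
      if s < l then l - s else if u ≤ s then s - (u - 1) else 0 := by
  apply le_antisymm
  · split_ifs with h1 h2
    · exact Finset.inf'_le (b := l) _ (by simp [Finset.mem_Ico]; omega) |>.trans (by rw [abs_of_nonneg (by omega)])
    · exact Finset.inf'_le (b := u - 1) _ (by simp [Finset.mem_Ico]; omega) |>.trans (by rw [abs_of_nonpos (by omega)]; omega)
    · exact Finset.inf'_le (b := s) _ (by simp [Finset.mem_Ico]; omega) |>.trans (by simp)
  · apply Finset.le_inf'
    intro x hx
    simp [Finset.mem_Ico] at hx
    rcases abs_cases (x - s) with ⟨he, _⟩ | ⟨he, _⟩ <;> rw [he] <;> split_ifs <;> omega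

/-- Equation (6): piecewise formula for the LLR distance function `R`, where the bit-0
set is the integer interval `[a, a + 2^γ)` and the bit-1 set is `[a + 2^γ, a + 2^(γ+1))`,
and `Int.fdiv` is integer floor division. -/
theorem llr_distance_piecewise (s a : ℤ) (γ : ℕ) :
    let R : ℤ :=
      ((Finset.Ico (a + 2 ^ γ) (a + 2 ^ (γ + 1))).inf'
          (Finset.nonempty_Ico.mpr
            (by have h1 : (0:ℤ) < 2 ^ γ := by positivity
                have h2 : (2:ℤ) ^ (γ + 1) = 2 ^ γ * 2 := pow_succ 2 γ
                omega))
          fun x => |x - s|) -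
      ((Finset.Ico a (a + 2 ^ γ)).inf'
          (Finset.nonempty_Ico.mpr
            (by have h1 : (0:ℤ) < 2 ^ γ := by positivity
                omega))
          fun x => |x - s|)
    (s < a → R = 2 ^ γ) ∧
    (a + 2 ^ (γ + 1) ≤ s → R = -2 ^ γ) ∧
    (a ≤ s → s < a + 2 ^ (γ + 1) →
      R = 2 ^ γ - (s - a) - Int.fdiv (s - a) (2 ^ γ)) := by
  intro R
  have h1 : (0:ℤ) < 2 ^ γ := by positivity
  have h2 : (2:ℤ) ^ (γ + 1) = 2 ^ γ * 2 := pow_succ 2 γ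
  have hR : R = (if s < a + 2 ^ γ then a + 2 ^ γ - s else
        if a + 2 ^ (γ+1) ≤ s then s - (a + 2 ^ (γ+1) - 1) else 0) -
      (if s < a then a - s else if a + 2 ^ γ ≤ s then s - (a + 2 ^ γ - 1) else 0) := by
    show _ - _ = _
    rw [inf_abs_Ico, inf_abs_Ico] <;> omega
  refine ⟨fun h => ?_, fun h => ?_, fun ha hb => ?_⟩
  · rw [hR]; split_ifs <;> omega
  · rw [hR]; split_ifs <;> omega
  · have hfd : Int.fdiv (s - a) (2 ^ γ) = (s - a) / 2 ^ γ :=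
      Int.fdiv_eq_ediv_of_nonneg _ (by omega)
    rcases lt_or_ge s (a + 2 ^ γ) with hc | hc
    · have : (s - a) / 2 ^ γ = 0 := Int.ediv_eq_zero_of_lt (by omega) (by omega)
      rw [hR, hfd, this]; split_ifs <;> omega
    · have : (s - a) / 2 ^ γ = 1 := by
        have := Int.ediv_emod_unique (a := s - a) (b := 2^γ) (r := s - a - 2^γ) (q := 1) (by omega)
        omega
      rw [hR, hfd, this]; split_ifs <;> omega
end
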